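/- arXiv:1601.03253 — 2 statements merged into one kernel-verified Lean document; each statement's English description precedes it below -/
import Mathlib

section
/- Let L, q, H > 0 and set y'(x) := (q/H)(L/2 − x) for x ∈ [0,L]. For all continuously differentiable functions u, v : [0,L] → ℝ, the squared cable-length increment satisfies |Γ(u)² − Γ(v)²| ≤ ( ∫₀^L |u'(x)| dx + ∫₀^L |v'(x)| dx )·∫₀^L |u'(x) − v'(x)| dx, where Γ(w) := ∫₀^L [√(1 + (w'(x) + y'(x))²) − √(1 + y'(x)²)] dx. -/
lemma sqrt_one_add_sq_lipschitz (a b : ℝ) :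
    |Real.sqrt (1 + a ^ 2) - Real.sqrt (1 + b ^ 2)| ≤ |a - b| := by
  have ha : Real.sqrt (1 + a ^ 2) = ‖(⟨1, a⟩ : ℂ)‖ := by
    rw [Complex.norm_def, Complex.normSq_mk]; ring_nf
  have hb : Real.sqrt (1 + b ^ 2) = ‖(⟨1, b⟩ : ℂ)‖ := by
    rw [Complex.norm_def, Complex.normSq_mk]; ring_nf
  have h := abs_norm_sub_norm_le (⟨1, a⟩ : ℂ) ⟨1, b⟩
  have hsub : (⟨1, a⟩ : ℂ) - ⟨1, b⟩ = ⟨0, a - b⟩ := by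
    apply Complex.ext <;> simp
  rw [ha, hb]
  calc |‖(⟨1,a⟩ : ℂ)‖ - ‖(⟨1,b⟩ : ℂ)‖| ≤ ‖(⟨1,a⟩ : ℂ) - ⟨1,b⟩‖ := h
    _ = |a - b| := by
        rw [hsub, Complex.norm_def, Complex.normSq_mk]
        simp [Real.sqrt_sq_eq_abs, sq_abs]
        rw [← Real.sqrt_sq_eq_abs]
        ring_nf

/-- For C¹ functions `u, v` on `[0,L]`:
`|Γ(u)² − Γ(v)²| ≤ (‖u'‖₁ + ‖v'‖₁) ‖u' − v'‖₁`. -/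
theorem abs_sq_cable_increment_sub_le (L q H : ℝ) (hL : 0 < L) (hq : 0 < q) (hH : 0 < H)
    (u u' v v' : ℝ → ℝ)
    (hu : ∀ x ∈ Set.Icc (0:ℝ) L, HasDerivAt u (u' x) x)
    (hu' : ContinuousOn u' (Set.Icc (0:ℝ) L))
    (hv : ∀ x ∈ Set.Icc (0:ℝ) L, HasDerivAt v (v' x) x)
    (hv' : ContinuousOn v' (Set.Icc (0:ℝ) L)) :
    |(∫ x in (0:ℝ)..L,
        (Real.sqrt (1 + (u' x + q / H * (L / 2 - x)) ^ 2)
          - Real.sqrt (1 + (q / H * (L / 2 - x)) ^ 2))) ^ 2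
      - (∫ x in (0:ℝ)..L,
        (Real.sqrt (1 + (v' x + q / H * (L / 2 - x)) ^ 2)
          - Real.sqrt (1 + (q / H * (L / 2 - x)) ^ 2))) ^ 2|
      ≤ ((∫ x in (0:ℝ)..L, |u' x|) + ∫ x in (0:ℝ)..L, |v' x|)
          * ∫ x in (0:ℝ)..L, |u' x - v' x| := by
  set c : ℝ → ℝ := fun x => q / H * (L / 2 - x) with hc
  set f : ℝ → ℝ := fun x => Real.sqrt (1 + (u' x + c x) ^ 2) - Real.sqrt (1 + (c x) ^ 2) with hf
  set g : ℝ → ℝ := fun x => Real.sqrt (1 + (v' x + c x) ^ 2) - Real.sqrt (1 + (c x) ^ 2) with hg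
  have hLle : (0:ℝ) ≤ L := hL.le
  have hIcc : Set.uIcc (0:ℝ) L = Set.Icc 0 L := Set.uIcc_of_le hLle
  have hcC : ContinuousOn c (Set.Icc (0:ℝ) L) := (Continuous.continuousOn (by continuity))
  have hfC : ContinuousOn f (Set.Icc (0:ℝ) L) := by
    apply ContinuousOn.sub
    · exact (Real.continuous_sqrt.comp_continuousOn
        (continuousOn_const.add (((hu'.add hcC).pow 2))))
    · exact (Real.continuous_sqrt.comp_continuousOn
        (continuousOn_const.add ((hcC.pow 2))))
  have hgC : ContinuousOn g (Set.Icc (0:ℝ) L) := by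
    apply ContinuousOn.sub
    · exact (Real.continuous_sqrt.comp_continuousOn
        (continuousOn_const.add (((hv'.add hcC).pow 2))))
    · exact (Real.continuous_sqrt.comp_continuousOn
        (continuousOn_const.add ((hcC.pow 2))))
  have hfI : IntervalIntegrable f MeasureTheory.volume 0 L := by
    apply ContinuousOn.intervalIntegrable; rwa [hIcc]
  have hgI : IntervalIntegrable g MeasureTheory.volume 0 L := by
    apply ContinuousOn.intervalIntegrable; rwa [hIcc]
  have hu'I : IntervalIntegrable (fun x => |u' x|) MeasureTheory.volume 0 L := by
    apply ContinuousOn.intervalIntegrable; rw [hIcc]; exact hu'.abs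
  have hv'I : IntervalIntegrable (fun x => |v' x|) MeasureTheory.volume 0 L := by
    apply ContinuousOn.intervalIntegrable; rw [hIcc]; exact hv'.abs
  have hdI : IntervalIntegrable (fun x => |u' x - v' x|) MeasureTheory.volume 0 L := by
    apply ContinuousOn.intervalIntegrable; rw [hIcc]; exact (hu'.sub hv').abs
  -- pointwise bounds
  have hfb : ∀ x, |f x| ≤ |u' x| := by
    intro x
    have := sqrt_one_add_sq_lipschitz (u' x + c x) (c x)
    simpa using this
  have hgb : ∀ x, |g x| ≤ |v' x| := by
    intro x
    have := sqrt_one_add_sq_lipschitz (v' x + c x) (c x)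
    simpa using this
  have hfgb : ∀ x, |f x - g x| ≤ |u' x - v' x| := by
    intro x
    have := sqrt_one_add_sq_lipschitz (u' x + c x) (v' x + c x)
    simpa [hf, hg, sub_sub_sub_cancel_right] using this
  -- integral bounds
  have key : ∀ (h : ℝ → ℝ) (b : ℝ → ℝ), IntervalIntegrable h MeasureTheory.volume 0 L →
      IntervalIntegrable b MeasureTheory.volume 0 L → (∀ x, |h x| ≤ b x) →
      |∫ x in (0:ℝ)..L, h x| ≤ ∫ x in (0:ℝ)..L, b x := by
    intro h b hI hbI hle
    calc |∫ x in (0:ℝ)..L, h x| ≤ ∫ x in (0:ℝ)..L, |h x| :=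
          intervalIntegral.abs_integral_le_integral_abs hLle
      _ ≤ ∫ x in (0:ℝ)..L, b x := by
          apply intervalIntegral.integral_mono_on hLle hI.abs hbI
          intro x _; exact hle x
  have hA : |∫ x in (0:ℝ)..L, f x| ≤ ∫ x in (0:ℝ)..L, |u' x| := key f _ hfI hu'I hfb
  have hB : |∫ x in (0:ℝ)..L, g x| ≤ ∫ x in (0:ℝ)..L, |v' x| := key g _ hgI hv'I hgb
  have hAB : |(∫ x in (0:ℝ)..L, f x) - ∫ x in (0:ℝ)..L, g x| ≤ ∫ x in (0:ℝ)..L, |u' x - v' x| := by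
    rw [← intervalIntegral.integral_sub hfI hgI]
    exact key (fun x => f x - g x) _ (hfI.sub hgI) hdI hfgb
  set A := ∫ x in (0:ℝ)..L, f x
  set B := ∫ x in (0:ℝ)..L, g x
  have habs : |A ^ 2 - B ^ 2| ≤ (|A| + |B|) * |A - B| := by
    have : A ^ 2 - B ^ 2 = (A + B) * (A - B) := by ring
    rw [this, abs_mul]
    exact mul_le_mul_of_nonneg_right (abs_add_le A B) (abs_nonneg _)
  refine habs.trans ?_
  have h1 : (0:ℝ) ≤ |A| + |B| := by positivity
  have h2 : (0:ℝ) ≤ ∫ x in (0:ℝ)..L, |u' x - v' x| := le_trans (abs_nonneg _) hAB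
  exact mul_le_mul (add_le_add hA hB) hAB (abs_nonneg _)
    (le_trans h1 (add_le_add hA hB))
end

section
/- Let L, q, H > 0 and set y'(x) := (q/H)(L/2 − x) for x ∈ [0,L]. Let w : [0,L] → ℝ be continuously differentiable with w' not identically zero, and define γ_w(t) := ∫₀^L [√(1 + t²·w'(x)²) − √(1 + y'(x)²)] dx for t ∈ ℝ. Then there exist real numbers T⁻ < 0 < T⁺ such that γ_w(T⁻) = γ_w(T⁺) = 0; consequently, for every such w the functions T^±·w − Y (with Y(x) := (q/(2H))x(L−x)) have zero cable-length increment, so the degenerate problem Γ(u)·(u''(x) − q/H)/(1 + (u'(x)+y'(x))²)^{3/2} = 0 on (0,L) with u(0) = u(L) = 0 admits infinitely many solutions. -/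
open Set intervalIntegral MeasureTheory

lemma sqrt_one_add_sq_ge_one (a : ℝ) : 1 ≤ Real.sqrt (1 + a ^ 2) := by
  have h := Real.sq_sqrt (show (0:ℝ) ≤ 1 + a ^ 2 by positivity)
  nlinarith [Real.sqrt_nonneg (1 + a ^ 2), sq_nonneg a]

lemma pow_helper (s t a b : ℝ) (hs : 0 < s) (ht : 0 < t) (ha : 1 < a) (hab : a < b)
    (i j : ℕ) (hij : i ≤ j)
    (h1 : s * a ^ i = t * a ^ j) (h2 : s * b ^ i = t * b ^ j) : i = j := by
  have ha0 : (0:ℝ) < a := by linarith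
  have hb0 : (0:ℝ) < b := by linarith
  set k := j - i with hk
  have hj : j = i + k := by omega
  by_contra hne
  have hk0 : k ≠ 0 := by omega
  have e1 : s = t * a ^ k := by
    have h : s * a ^ i = t * a ^ k * a ^ i := by rw [h1, hj, pow_add]; ring
    exact mul_right_cancel₀ (by positivity) h
  have e2 : s = t * b ^ k := by
    have h : s * b ^ i = t * b ^ k * b ^ i := by rw [h2, hj, pow_add]; ring
    exact mul_right_cancel₀ (by positivity) h
  have hakbk : a ^ k < b ^ k := pow_lt_pow_left₀ hab ha0.le hk0
  have : t * a ^ k < t * b ^ k := mul_lt_mul_of_pos_left hakbk ht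
  rw [← e1, ← e2] at this
  exact lt_irrefl s this
lemma core (L q H : ℝ) (hL : 0 < L) (hq : 0 < q) (hH : 0 < H)
    (W : ℝ → ℝ) (hW : ContinuousOn W (Set.Icc 0 L))
    (hne : ∃ x ∈ Set.Icc (0:ℝ) L, W x ≠ 0) :
    ∃ T > (0:ℝ), (∫ x in (0:ℝ)..L,
      (Real.sqrt (1 + T ^ 2 * W x ^ 2) - Real.sqrt (1 + (q / H * (L / 2 - x)) ^ 2))) = 0 := by
  -- clamp
  set cl : ℝ → ℝ := fun x => max 0 (min x L) with hcl
  have hclcont : Continuous cl := by fun_prop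
  have hclmem : ∀ x, cl x ∈ Icc 0 L := by
    intro x; exact ⟨le_max_left _ _, max_le (le_of_lt hL) (min_le_right _ _)⟩
  have hcleq : ∀ x ∈ Icc (0:ℝ) L, cl x = x := by
    intro x hx; simp [hcl, min_eq_left hx.2, max_eq_right hx.1]
  set V : ℝ → ℝ := fun x => W (cl x) with hV
  have hVcont : Continuous V := hW.comp_continuous hclcont hclmem
  have hVeq : ∀ x ∈ Icc (0:ℝ) L, V x = W x := fun x hx => by rw [hV]; simp [hcleq x hx]
  set A : ℝ → ℝ := fun x => q / H * (L / 2 - x) with hA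
  have hAcont : Continuous A := by fun_prop
  set φ : ℝ → ℝ := fun t => ∫ x in (0:ℝ)..L,
    (Real.sqrt (1 + t ^ 2 * V x ^ 2) - Real.sqrt (1 + A x ^ 2)) with hφ
  -- continuity of φ
  have hφcont : Continuous φ := by
    apply continuous_parametric_intervalIntegral_of_continuous'
    fun_prop
  -- φ 0 < 0
  have hint : ∀ a b : ℝ, IntervalIntegrable (fun x => Real.sqrt (1 + A x ^ 2) - 1) volume a b :=
    fun a b => (by fun_prop : Continuous fun x => Real.sqrt (1 + A x ^ 2) - 1).intervalIntegrable a b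
  have hC : 0 < ∫ x in (0:ℝ)..L, (Real.sqrt (1 + A x ^ 2) - 1) := by
    have hsplit : (∫ x in (0:ℝ)..(L/2), (Real.sqrt (1 + A x ^ 2) - 1))
        + (∫ x in (L/2)..L, (Real.sqrt (1 + A x ^ 2) - 1))
        = ∫ x in (0:ℝ)..L, (Real.sqrt (1 + A x ^ 2) - 1) :=
      integral_add_adjacent_intervals (hint 0 (L/2)) (hint (L/2) L)
    have h1 : 0 < ∫ x in (0:ℝ)..(L/2), (Real.sqrt (1 + A x ^ 2) - 1) := by
      apply intervalIntegral_pos_of_pos_on (hint 0 (L/2)) _ (by linarith)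
      intro x hx
      have hAx : 0 < A x := by
        rw [hA]
        have : 0 < L / 2 - x := by simp at hx; linarith [hx.2]
        positivity
      have hs := Real.sq_sqrt (show (0:ℝ) ≤ 1 + A x ^ 2 by positivity)
      nlinarith [Real.sqrt_nonneg (1 + A x ^ 2), mul_pos hAx hAx, sq_nonneg (A x)]
    have h2 : 0 ≤ ∫ x in (L/2)..L, (Real.sqrt (1 + A x ^ 2) - 1) := by
      apply integral_nonneg (by linarith)
      intro x _; linarith [sqrt_one_add_sq_ge_one (A x)]
    linarith
  have hφ0 : φ 0 < 0 := by
    have h : φ 0 = - ∫ x in (0:ℝ)..L, (Real.sqrt (1 + A x ^ 2) - 1) := by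
      simp only [hφ]
      rw [← intervalIntegral.integral_neg]
      apply integral_congr
      intro x _
      simp [Real.sqrt_one]
    rw [h]; linarith
  -- find subinterval where |V| is big
  obtain ⟨x₀, hx₀, hWx₀⟩ := hne
  have hVx₀ : V x₀ ≠ 0 := by rw [hVeq x₀ hx₀]; exact hWx₀
  set δ : ℝ := |V x₀| / 2 with hδ
  have hδpos : 0 < δ := by positivity
  obtain ⟨ε, hεpos, hε⟩ := Metric.continuous_iff.1 hVcont x₀ δ hδpos
  set e : ℝ := min (ε / 2) (L / 2) with he
  have hepos : 0 < e := by positivity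
  have heε : e ≤ ε / 2 := min_le_left _ _
  set a : ℝ := max 0 (x₀ - e) with ha
  set b : ℝ := min L (x₀ + e) with hb
  have hab : a < b := by
    rw [ha, hb]
    apply max_lt <;> apply lt_min
    · exact hL
    · linarith [hx₀.1]
    · linarith [hx₀.2, (min_le_right (ε/2) (L/2) : e ≤ L/2)]
    · linarith
  have ha0 : 0 ≤ a := le_max_left _ _
  have hbL : b ≤ L := min_le_left _ _
  have haxe : x₀ - e ≤ a := le_max_right _ _
  have hbxe : b ≤ x₀ + e := min_le_right _ _
  have hVbig : ∀ x ∈ Icc a b, δ ≤ |V x| := by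
    intro x hx
    have hd : dist x x₀ < ε := by
      rw [Real.dist_eq, abs_lt]
      constructor
      · linarith [hx.1]
      · linarith [hx.2]
    have h2 := hε x hd
    rw [Real.dist_eq] at h2
    have h1 := abs_sub_abs_le_abs_sub (V x₀) (V x)
    rw [abs_sub_comm] at h2
    have h3 : |V x₀| - |V x| < δ := lt_of_le_of_lt h1 h2
    rw [hδ] at h3 ⊢
    linarith
  -- choose big T
  set C : ℝ := ∫ x in (0:ℝ)..L, Real.sqrt (1 + A x ^ 2) with hCdef
  set T : ℝ := max 1 ((C + 1) / ((b - a) * δ)) with hT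
  have hTpos : (0:ℝ) < T := lt_of_lt_of_le one_pos (le_max_left _ _)
  have hTbig : C + 1 ≤ (b - a) * δ * T := by
    have h1 : (C + 1) / ((b - a) * δ) ≤ T := le_max_right _ _
    have h2 : 0 < (b - a) * δ := by
      have : 0 < b - a := by linarith
      positivity
    calc C + 1 = (C + 1) / ((b - a) * δ) * ((b - a) * δ) := (div_mul_cancel₀ _ h2.ne').symm
    _ ≤ T * ((b - a) * δ) := mul_le_mul_of_nonneg_right h1 h2.le
    _ = (b - a) * δ * T := by ring
  -- lower bound for ∫ √(1+T²V²)
  have hintT : ∀ s t : ℝ, IntervalIntegrable (fun x => Real.sqrt (1 + T ^ 2 * V x ^ 2)) volume s t :=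
    fun s t => (by fun_prop : Continuous fun x => Real.sqrt (1 + T ^ 2 * V x ^ 2)).intervalIntegrable s t
  have hge1 : ∀ x : ℝ, (1:ℝ) ≤ Real.sqrt (1 + T ^ 2 * V x ^ 2) := by
    intro x
    rw [show 1 + T ^ 2 * V x ^ 2 = 1 + (T * V x) ^ 2 by ring]
    exact sqrt_one_add_sq_ge_one _
  have hsplit3 : (∫ x in (0:ℝ)..a, Real.sqrt (1 + T ^ 2 * V x ^ 2))
      + (∫ x in a..b, Real.sqrt (1 + T ^ 2 * V x ^ 2))
      + (∫ x in b..L, Real.sqrt (1 + T ^ 2 * V x ^ 2))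
      = ∫ x in (0:ℝ)..L, Real.sqrt (1 + T ^ 2 * V x ^ 2) := by
    rw [integral_add_adjacent_intervals (hintT 0 a) (hintT a b),
      integral_add_adjacent_intervals (hintT 0 b) (hintT b L)]
  have hI1 : (0:ℝ) ≤ ∫ x in (0:ℝ)..a, Real.sqrt (1 + T ^ 2 * V x ^ 2) :=
    integral_nonneg ha0 (fun x _ => Real.sqrt_nonneg _)
  have hI3 : (0:ℝ) ≤ ∫ x in b..L, Real.sqrt (1 + T ^ 2 * V x ^ 2) :=
    integral_nonneg hbL (fun x _ => Real.sqrt_nonneg _)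
  have hI2 : (b - a) * (δ * T) ≤ ∫ x in a..b, Real.sqrt (1 + T ^ 2 * V x ^ 2) := by
    have hconst : ∫ x in a..b, (δ * T : ℝ) = (b - a) * (δ * T) := by
      simp [smul_eq_mul]; try ring
    rw [← hconst]
    apply integral_mono_on hab.le
      ((continuous_const : Continuous fun _ : ℝ => (δ * T : ℝ)).intervalIntegrable a b)
      (hintT a b)
    intro x hx
    have h1 : δ * T ≤ |V x| * T := mul_le_mul_of_nonneg_right (hVbig x hx) hTpos.le
    have h2 : |V x| * T = Real.sqrt (T ^ 2 * V x ^ 2) := by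
      rw [show T ^ 2 * V x ^ 2 = (|V x| * T) ^ 2 by rw [mul_pow, sq_abs]; ring,
        Real.sqrt_sq (by positivity)]
    have h3 : Real.sqrt (T ^ 2 * V x ^ 2) ≤ Real.sqrt (1 + T ^ 2 * V x ^ 2) :=
      Real.sqrt_le_sqrt (by linarith)
    linarith
  have hφT : 0 < φ T := by
    have hCcont : Continuous fun x => Real.sqrt (1 + A x ^ 2) := by fun_prop
    have hsub : φ T = (∫ x in (0:ℝ)..L, Real.sqrt (1 + T ^ 2 * V x ^ 2)) - C := by
      simp only [hφ, hCdef]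
      rw [← integral_sub (hintT 0 L) (hCcont.intervalIntegrable 0 L)]
    rw [hsub]
    have hb2 : C + 1 ≤ ∫ x in (0:ℝ)..L, Real.sqrt (1 + T ^ 2 * V x ^ 2) := by
      rw [← hsplit3]
      nlinarith
    linarith
  -- IVT
  obtain ⟨t, ht, hφt⟩ := intermediate_value_Icc hTpos.le hφcont.continuousOn ⟨hφ0.le, hφT.le⟩
  have htpos : 0 < t := by
    rcases ht.1.lt_or_eq with h | h
    · exact h
    · rw [← h] at hφt; exact absurd hφt hφ0.ne
  refine ⟨t, htpos, ?_⟩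
  have key : φ t = ∫ x in (0:ℝ)..L,
      (Real.sqrt (1 + t ^ 2 * W x ^ 2) - Real.sqrt (1 + (q / H * (L / 2 - x)) ^ 2)) := by
    simp only [hφ]
    apply integral_congr
    intro x hx
    rw [uIcc_of_le hL.le] at hx
    simp [hVeq x hx, hA]
  rw [← key]; exact hφt


/-- For a C¹ function `w` on `[0,L]` with `w'` not identically zero, there exist
`T⁻ < 0 < T⁺` with `γ_w(T⁻) = γ_w(T⁺) = 0`, where
`γ_w(t) = ∫₀^L [√(1 + t²w'(x)²) − √(1 + y'(x)²)] dx`; consequently the functions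
`u = T^± w − Y` (with `Y(x) = (q/(2H))x(L−x)`, so `u' = T^± w' − y'`) have zero
cable-length increment `Γ(u) = 0`, and hence solve the degenerate problem
`Γ(u)(u'' − q/H)/(1 + (u' + y')²)^{3/2} = 0` pointwise; moreover the set of C¹
functions vanishing at `0` and `L` with zero cable-length increment is infinite,
so the degenerate problem admits infinitely many solutions. -/
theorem degenerate_problem_infinitely_many_solutions
    (L q H : ℝ) (hL : 0 < L) (hq : 0 < q) (hH : 0 < H)
    (w w' : ℝ → ℝ)
    (hw : ∀ x ∈ Set.Icc (0:ℝ) L, HasDerivAt w (w' x) x)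
    (hw' : ContinuousOn w' (Set.Icc (0:ℝ) L))
    (hne : ∃ x ∈ Set.Icc (0:ℝ) L, w' x ≠ 0) :
    (∃ Tm Tp : ℝ, Tm < 0 ∧ 0 < Tp ∧
      (∫ x in (0:ℝ)..L,
          (Real.sqrt (1 + Tm ^ 2 * w' x ^ 2)
            - Real.sqrt (1 + (q / H * (L / 2 - x)) ^ 2))) = 0 ∧
      (∫ x in (0:ℝ)..L,
          (Real.sqrt (1 + Tp ^ 2 * w' x ^ 2)
            - Real.sqrt (1 + (q / H * (L / 2 - x)) ^ 2))) = 0 ∧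
      -- the functions `T·w − Y` for `T ∈ {T⁻, T⁺}` have zero cable-length increment:
      -- their derivative is `u' = T·w' − y'`, so `u' + y' = T·w'` and `Γ(u) = 0`,
      -- whence they solve the degenerate equation pointwise
      ∀ T : ℝ, T = Tm ∨ T = Tp →
        (∫ x in (0:ℝ)..L,
            (Real.sqrt (1 + ((T * w' x - q / H * (L / 2 - x)) + q / H * (L / 2 - x)) ^ 2)
              - Real.sqrt (1 + (q / H * (L / 2 - x)) ^ 2))) = 0 ∧
        ∀ u'' : ℝ → ℝ, ∀ x ∈ Set.Ioo (0:ℝ) L,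
          (∫ s in (0:ℝ)..L,
              (Real.sqrt (1 + ((T * w' s - q / H * (L / 2 - s)) + q / H * (L / 2 - s)) ^ 2)
                - Real.sqrt (1 + (q / H * (L / 2 - s)) ^ 2)))
            * ((u'' x - q / H)
              / (1 + ((T * w' x - q / H * (L / 2 - x)) + q / H * (L / 2 - x)) ^ 2)
                  ^ ((3:ℝ)/2)) = 0)
    ∧ Set.Infinite {u : ℝ → ℝ |
        u 0 = 0 ∧ u L = 0 ∧
        ∃ u' : ℝ → ℝ, (∀ x ∈ Set.Icc (0:ℝ) L, HasDerivAt u (u' x) x) ∧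
          ContinuousOn u' (Set.Icc (0:ℝ) L) ∧
          (∫ x in (0:ℝ)..L,
              (Real.sqrt (1 + (u' x + q / H * (L / 2 - x)) ^ 2)
                - Real.sqrt (1 + (q / H * (L / 2 - x)) ^ 2))) = 0} := by
  constructor
  · -- Part 1
    obtain ⟨T, hT, hTint⟩ := core L q H hL hq hH w' hw' hne
    have hconv : ∀ S : ℝ,
        (∫ x in (0:ℝ)..L,
            (Real.sqrt (1 + ((S * w' x - q / H * (L / 2 - x)) + q / H * (L / 2 - x)) ^ 2)
              - Real.sqrt (1 + (q / H * (L / 2 - x)) ^ 2)))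
        = ∫ x in (0:ℝ)..L,
            (Real.sqrt (1 + S ^ 2 * w' x ^ 2)
              - Real.sqrt (1 + (q / H * (L / 2 - x)) ^ 2)) := by
      intro S
      apply integral_congr
      intro x _
      dsimp only
      rw [show ((S * w' x - q / H * (L / 2 - x)) + q / H * (L / 2 - x)) ^ 2
        = S ^ 2 * w' x ^ 2 by ring]
    have hTmint : (∫ x in (0:ℝ)..L,
        (Real.sqrt (1 + (-T) ^ 2 * w' x ^ 2)
          - Real.sqrt (1 + (q / H * (L / 2 - x)) ^ 2))) = 0 := by
      simp only [neg_sq]; exact hTint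
    refine ⟨-T, T, neg_neg_iff_pos.2 hT, hT, hTmint, hTint, ?_⟩
    intro S hS
    have hSzero : (∫ x in (0:ℝ)..L,
        (Real.sqrt (1 + ((S * w' x - q / H * (L / 2 - x)) + q / H * (L / 2 - x)) ^ 2)
          - Real.sqrt (1 + (q / H * (L / 2 - x)) ^ 2))) = 0 := by
      rcases hS with h | h <;> rw [h, hconv]
      · simpa using hTmint
      · exact hTint
    exact ⟨hSzero, fun u'' x _ => by rw [hSzero, zero_mul]⟩
  · -- Part 2 : infinitely many solutions
    set Y : ℝ → ℝ := fun x => q / (2 * H) * (x * (L - x)) with hY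
    set P : ℕ → ℝ → ℝ := fun n x => x ^ (n + 1) * (L - x) with hP
    set D : ℕ → ℝ → ℝ := fun n x => ((n:ℝ) + 1) * x ^ n * (L - x) - x ^ (n + 1) with hD
    have hDcont : ∀ n, Continuous (D n) := by intro n; rw [hD]; fun_prop
    have hDL : ∀ n, D n L = -L ^ (n + 1) := by intro n; simp [hD]
    have hex : ∀ n : ℕ, ∃ T > (0:ℝ), (∫ x in (0:ℝ)..L,
        (Real.sqrt (1 + T ^ 2 * D n x ^ 2)
          - Real.sqrt (1 + (q / H * (L / 2 - x)) ^ 2))) = 0 := by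
      intro n
      apply core L q H hL hq hH (D n) (hDcont n).continuousOn
      refine ⟨L, ⟨hL.le, le_refl L⟩, ?_⟩
      rw [hDL n]
      have : (0:ℝ) < L ^ (n + 1) := by positivity
      intro h
      rw [neg_eq_zero] at h
      exact this.ne' h
    choose Tn hTnpos hTnint using hex
    set F : ℕ → ℝ → ℝ := fun n x => Tn n * P n x - Y x with hF
    apply Set.infinite_of_injective_forall_mem (f := F)
    case hi => -- injectivity
      intro n m hnm
      have key : ∀ x : ℝ, Tn n * P n x = Tn m * P m x := by
        intro x
        have := congrFun hnm x
        simp only [hF] at this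
        linarith
    -- evaluate at L+1 and L+2
      have k1 := key (L + 1)
      have k2 := key (L + 2)
      simp only [hP] at k1 k2
      have e1 : Tn n * (L + 1) ^ (n + 1) = Tn m * (L + 1) ^ (m + 1) := by
        have h : L - (L + 1) = -1 := by ring
        rw [h] at k1; nlinarith [k1]
      have e2 : Tn n * (L + 2) ^ (n + 1) = Tn m * (L + 2) ^ (m + 1) := by
        have h : L - (L + 2) = -2 := by ring
        rw [h] at k2; nlinarith [k2]
      have ha1 : (1:ℝ) < L + 1 := by linarith
      have hab : (L:ℝ) + 1 < L + 2 := by linarith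
      rcases le_total n m with h | h
      · have := pow_helper (Tn n) (Tn m) (L+1) (L+2) (hTnpos n) (hTnpos m) ha1 hab
          (n+1) (m+1) (by omega) e1 e2
        omega
      · have := pow_helper (Tn m) (Tn n) (L+1) (L+2) (hTnpos m) (hTnpos n) ha1 hab
          (m+1) (n+1) (by omega) e1.symm e2.symm
        omega
    case hf => -- membership
      intro n
      refine ⟨?_, ?_, fun x => Tn n * D n x - q / H * (L / 2 - x), ?_, ?_, ?_⟩
      · simp [hF, hP, hY]
      · simp [hF, hP, hY]
      · intro x _
        have h1 : HasDerivAt (fun x : ℝ => x ^ (n + 1) * (L - x))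
            (((n:ℝ) + 1) * x ^ n * (L - x) - x ^ (n + 1)) x := by
          have hp := hasDerivAt_pow (n + 1) x
          have hs : HasDerivAt (fun x : ℝ => L - x) (-1) x := (hasDerivAt_id x).const_sub L
          have := hp.mul hs
          exact this.congr_deriv (by rw [Nat.add_sub_cancel]; push_cast; ring)
        have h2 : HasDerivAt (fun x : ℝ => q / (2 * H) * (x * (L - x)))
            (q / H * (L / 2 - x)) x := by
          have hs : HasDerivAt (fun x : ℝ => L - x) (-1) x := (hasDerivAt_id x).const_sub L
          have := ((hasDerivAt_id x).mul hs).const_mul (q / (2 * H))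
          exact this.congr_deriv (by simp only [id]; ring)
        have := (h1.const_mul (Tn n)).sub h2
        exact this
      · rw [hD]; fun_prop
      · have : ∀ x : ℝ, ((Tn n * D n x - q / H * (L / 2 - x)) + q / H * (L / 2 - x)) ^ 2
            = (Tn n) ^ 2 * D n x ^ 2 := by intro x; ring
        calc (∫ x in (0:ℝ)..L,
              (Real.sqrt (1 + ((Tn n * D n x - q / H * (L / 2 - x)) + q / H * (L / 2 - x)) ^ 2)
                - Real.sqrt (1 + (q / H * (L / 2 - x)) ^ 2)))
            = ∫ x in (0:ℝ)..L,
              (Real.sqrt (1 + (Tn n) ^ 2 * D n x ^ 2)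
                - Real.sqrt (1 + (q / H * (L / 2 - x)) ^ 2)) := by
              apply integral_congr; intro x _; dsimp only; rw [this x]
          _ = 0 := hTnint n
end
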